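/- arXiv:1705.05534 — 2 statements merged into one kernel-verified Lean document; each statement's English description precedes it below -/
import Mathlib

section
/- The family (1 − 1/(p(p−1)))_{p prime} is multipliable, its product A = Π_{p prime} (1 − 1/(p(p−1))) (Artin's constant) satisfies A > 0, and moreover Π_{p prime} (1 + 1/(p(p−1))) − Π_{p prime} (1 − 1/(p(p−1))) < 2. -/
open scoped BigOperators

namespace ArtinAux

/-- A prime, as an element of `Nat.Primes`. -/
def mkP (n : ℕ) (h : n.Prime) : Nat.Primes := ⟨n, h⟩

@[simp]
lemma coe_mkP (n : ℕ) (h : n.Prime) : ((mkP n h : Nat.Primes) : ℕ) = n := rfl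

/-- The small primes we treat explicitly. -/
def F6 : Finset Nat.Primes :=
  {mkP 2 (by norm_num), mkP 3 (by norm_num), mkP 5 (by norm_num), mkP 7 (by norm_num),
    mkP 11 (by norm_num), mkP 13 (by norm_num)}

lemma mem_F6_of (p : Nat.Primes) (h : (p : ℕ) ∈ ({2,3,5,7,11,13} : Finset ℕ)) : p ∈ F6 := by
  simp only [Finset.mem_insert, Finset.mem_singleton] at h
  simp only [F6, Finset.mem_insert, Finset.mem_singleton]
  rcases h with h|h|h|h|h|h
  · exact Or.inl (Nat.Primes.coe_nat_injective h)
  · exact Or.inr (Or.inl (Nat.Primes.coe_nat_injective h))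
  · exact Or.inr (Or.inr (Or.inl (Nat.Primes.coe_nat_injective h)))
  · exact Or.inr (Or.inr (Or.inr (Or.inl (Nat.Primes.coe_nat_injective h))))
  · exact Or.inr (Or.inr (Or.inr (Or.inr (Or.inl (Nat.Primes.coe_nat_injective h)))))
  · exact Or.inr (Or.inr (Or.inr (Or.inr (Or.inr (Nat.Primes.coe_nat_injective h)))))

lemma ge17_of_not_mem (p : Nat.Primes) (hp : p ∉ F6) : 17 ≤ (p : ℕ) ∧ (p : ℕ) % 2 = 1 := by
  have hnm : (p : ℕ) ∉ ({2,3,5,7,11,13} : Finset ℕ) := fun h => hp (mem_F6_of p h)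
  obtain ⟨n, hn⟩ := p
  simp only [Finset.mem_insert, Finset.mem_singleton] at hnm
  push_neg at hnm
  have h2 : 2 ≤ n := hn.two_le
  have h17 : 17 ≤ n := by
    by_contra hlt
    push_neg at hlt
    interval_cases n <;> simp_all <;> norm_num at hn
  have hodd : n % 2 = 1 := Nat.odd_iff.mp (hn.odd_of_ne_two (by omega))
  exact ⟨h17, hodd⟩

/-- The comparison sequence for the tail. -/
noncomputable def w (t : ℕ) : ℝ := 1 / ((2 * (t : ℝ) + 15) * (2 * (t : ℝ) + 17))

lemma w_nonneg (t : ℕ) : 0 ≤ w t := by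
  unfold w; positivity

lemma sum_w_le (s : Finset ℕ) : ∑ t ∈ s, w t ≤ 1 / 30 := by
  obtain ⟨n, hsn⟩ := s.exists_nat_subset_range
  have h1 : ∑ t ∈ s, w t ≤ ∑ t ∈ Finset.range n, w t :=
    Finset.sum_le_sum_of_subset_of_nonneg hsn (fun t _ _ => w_nonneg t)
  have h2 : ∑ t ∈ Finset.range n, w t
      = (fun i : ℕ => 1 / (2 * (2 * (i : ℝ) + 15))) 0
        - (fun i : ℕ => 1 / (2 * (2 * (i : ℝ) + 15))) n := by
    rw [← Finset.sum_range_sub' (fun i : ℕ => 1 / (2 * (2 * (i : ℝ) + 15))) n]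
    refine Finset.sum_congr rfl fun i _ => ?_
    unfold w
    have hi : (0:ℝ) ≤ (i:ℝ) := Nat.cast_nonneg i
    push_cast
    rw [div_sub_div _ _ (by positivity) (by positivity), div_eq_div_iff (by positivity) (by positivity)]
    ring
  have h3 : (0:ℝ) ≤ 1 / (2 * (2 * (n : ℝ) + 15)) := by positivity
  simp only at h2
  rw [h2] at h1
  have h4 : (0:ℝ) ≤ (2*(n:ℝ)+15)⁻¹ := by positivity
  norm_num at h1 ⊢
  linarith
lemma tail_sum (s : Finset Nat.Primes) (hs : ∀ p ∈ s, p ∉ F6) :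
    ∑ p ∈ s, 1 / ((p : ℝ) * ((p : ℝ) - 1)) ≤ 1 / 30 := by
  classical
  set e : Nat.Primes → ℕ := fun p => ((p : ℕ) - 17) / 2 with he
  have hrep : ∀ p ∈ s, (p : ℕ) = 2 * e p + 17 := by
    intro p hp
    have h := ge17_of_not_mem p (hs p hp)
    simp only [he]
    omega
  have hterm : ∀ p ∈ s, 1 / ((p : ℝ) * ((p : ℝ) - 1)) ≤ w (e p) := by
    intro p hp
    have h := hrep p hp
    have hcast : ((p : ℕ) : ℝ) = 2 * (e p : ℝ) + 17 := by exact_mod_cast congrArg (Nat.cast (R := ℝ)) h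
    rw [hcast]
    unfold w
    set t : ℝ := (e p : ℝ) with ht
    have ht0 : 0 ≤ t := Nat.cast_nonneg _
    rw [div_le_div_iff₀ (by nlinarith) (by nlinarith)]
    nlinarith
  calc ∑ p ∈ s, 1 / ((p : ℝ) * ((p : ℝ) - 1)) ≤ ∑ p ∈ s, w (e p) := Finset.sum_le_sum hterm
    _ = ∑ t ∈ s.image e, w t := by
        rw [Finset.sum_image]
        intro p hp q hq hpq
        have h1 := hrep p hp
        have h2 := hrep q hq
        exact Subtype.ext (by omega)
    _ ≤ 1 / 30 := sum_w_le _

lemma sum_F6 : ∑ p ∈ F6, 1 / ((p : ℝ) * ((p : ℝ) - 1)) = 11351 / 15015 := by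
  simp only [F6]
  rw [Finset.sum_insert (by decide), Finset.sum_insert (by decide), Finset.sum_insert (by decide),
    Finset.sum_insert (by decide), Finset.sum_insert (by decide), Finset.sum_singleton]
  norm_num

lemma prod_F6 : ∏ p ∈ F6, (1 + 1 / ((p : ℝ) * ((p : ℝ) - 1)))
    = (3*7*21*43*111*157 : ℝ) / (2*6*20*42*110*156) := by
  simp only [F6]
  rw [Finset.prod_insert (by decide), Finset.prod_insert (by decide), Finset.prod_insert (by decide),
    Finset.prod_insert (by decide), Finset.prod_insert (by decide), Finset.prod_singleton]
  norm_num

lemma a_nonneg (p : Nat.Primes) : 0 ≤ 1 / ((p : ℝ) * ((p : ℝ) - 1)) := by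
  have h2 : (2:ℝ) ≤ (p : ℕ) := by exact_mod_cast p.2.two_le
  have hd : (0:ℝ) < (p:ℝ) * ((p:ℝ) - 1) := by nlinarith
  exact div_nonneg zero_le_one hd.le

lemma a_le_half (p : Nat.Primes) : 1 / ((p : ℝ) * ((p : ℝ) - 1)) ≤ 1/2 := by
  have h2 : (2:ℝ) ≤ (p : ℕ) := by exact_mod_cast p.2.two_le
  rw [div_le_div_iff₀ (by nlinarith) (by norm_num)]
  nlinarith

/-- Every finite partial sum of `a` is at most `23703/30030 < 1`. -/
lemma sum_bound (s : Finset Nat.Primes) :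
    ∑ p ∈ s, 1 / ((p : ℝ) * ((p : ℝ) - 1)) ≤ 11351 / 15015 + 1 / 30 := by
  classical
  rw [← Finset.sum_filter_add_sum_filter_not s (· ∈ F6)]
  have h1 : ∑ p ∈ s.filter (· ∈ F6), 1 / ((p : ℝ) * ((p : ℝ) - 1))
      ≤ ∑ p ∈ F6, 1 / ((p : ℝ) * ((p : ℝ) - 1)) := by
    refine Finset.sum_le_sum_of_subset_of_nonneg ?_ (fun p _ _ => a_nonneg p)
    intro p hp
    exact (Finset.mem_filter.mp hp).2
  have h2 := tail_sum (s.filter (· ∉ F6)) (fun p hp => (Finset.mem_filter.mp hp).2)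
  rw [sum_F6] at h1
  calc _ ≤ (11351/15015 : ℝ) + ∑ p ∈ s.filter (fun p => ¬ p ∈ F6), 1 / ((p : ℝ) * ((p : ℝ) - 1)) := by
        exact add_le_add_left h1 _
    _ ≤ 11351/15015 + 1/30 := add_le_add_right h2 _

/-- Weierstrass inequality: `1 - ∑ a ≤ ∏ (1 - a)` for `a ∈ [0,1]`. -/
lemma one_sub_sum_le_prod {ι : Type*} (s : Finset ι) (a : ι → ℝ)
    (h0 : ∀ i ∈ s, 0 ≤ a i) (h1 : ∀ i ∈ s, a i ≤ 1) :
    1 - ∑ i ∈ s, a i ≤ ∏ i ∈ s, (1 - a i) := by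
  classical
  induction s using Finset.induction_on with
  | empty => simp
  | insert _ _ hnm ih =>
    rename_i j t
    rw [Finset.sum_insert hnm, Finset.prod_insert hnm]
    have ih' := ih (fun i hi => h0 i (Finset.mem_insert_of_mem hi))
      (fun i hi => h1 i (Finset.mem_insert_of_mem hi))
    have hj0 : 0 ≤ a j := h0 j (Finset.mem_insert_self j t)
    have hj1 : a j ≤ 1 := h1 j (Finset.mem_insert_self j t)
    have hsum0 : 0 ≤ ∑ i ∈ t, a i := Finset.sum_nonneg (fun i hi => h0 i (Finset.mem_insert_of_mem hi))
    nlinarith [mul_le_mul_of_nonneg_left ih' (by linarith : (0:ℝ) ≤ 1 - a j)]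

/-- Multipliability for factors in `[0,1]`. -/
lemma multipliable_of_le_one {f : Nat.Primes → ℝ} (h0 : ∀ p, 0 ≤ f p) (h1 : ∀ p, f p ≤ 1) :
    Multipliable f := by
  have anti : Antitone (fun s : Finset Nat.Primes => ∏ p ∈ s, f p) := by
    intro s t hst
    show ∏ p ∈ t, f p ≤ ∏ p ∈ s, f p
    have := Finset.prod_sdiff (f := f) hst
    rw [← this]
    exact mul_le_of_le_one_left (Finset.prod_nonneg fun p _ => h0 p)
      (Finset.prod_le_one (fun p _ => h0 p) (fun p _ => h1 p))
  exact ⟨_, tendsto_atTop_ciInf anti ⟨0, fun x hx => by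
    obtain ⟨u, rfl⟩ := hx
    exact Finset.prod_nonneg fun p _ => h0 p⟩⟩

/-- Multipliability for factors `≥ 1` with bounded partial products. -/
lemma multipliable_of_one_le {f : Nat.Primes → ℝ} (h1 : ∀ p, 1 ≤ f p)
    (C : ℝ) (hC : ∀ s : Finset Nat.Primes, ∏ p ∈ s, f p ≤ C) :
    Multipliable f := by
  have mono : Monotone (fun s : Finset Nat.Primes => ∏ p ∈ s, f p) := by
    intro s t hst
    show ∏ p ∈ s, f p ≤ ∏ p ∈ t, f p
    have := Finset.prod_sdiff (f := f) hst
    rw [← this]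
    refine le_mul_of_one_le_left (Finset.prod_nonneg fun p _ => le_trans zero_le_one (h1 p)) ?_
    calc (1:ℝ) = ∏ _p ∈ t \ s, 1 := by simp
      _ ≤ ∏ p ∈ t \ s, f p := Finset.prod_le_prod (fun _ _ => zero_le_one) (fun p _ => h1 p)
  exact ⟨_, tendsto_atTop_ciSup mono ⟨C, fun x hx => by
    obtain ⟨u, rfl⟩ := hx
    exact hC u⟩⟩

/-- The uniform bound for partial products of `1 + a`. -/
lemma prod_one_add_bound (s : Finset Nat.Primes) :
    ∏ p ∈ s, (1 + 1 / ((p : ℝ) * ((p : ℝ) - 1)))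
      ≤ ((3*7*21*43*111*157 : ℝ) / (2*6*20*42*110*156)) * Real.exp (1/30) := by
  classical
  rw [← Finset.prod_filter_mul_prod_filter_not s (· ∈ F6)]
  have hone : ∀ p : Nat.Primes, (1:ℝ) ≤ 1 + 1 / ((p : ℝ) * ((p : ℝ) - 1)) :=
    fun p => by linarith [a_nonneg p]
  have h1 : ∏ p ∈ s.filter (· ∈ F6), (1 + 1 / ((p : ℝ) * ((p : ℝ) - 1)))
      ≤ (3*7*21*43*111*157 : ℝ) / (2*6*20*42*110*156) := by
    rw [← prod_F6]
    have hsub : s.filter (· ∈ F6) ⊆ F6 := fun p hp => (Finset.mem_filter.mp hp).2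
    rw [← Finset.prod_sdiff hsub]
    refine le_mul_of_one_le_left (Finset.prod_nonneg fun p _ => le_trans zero_le_one (hone p)) ?_
    calc (1:ℝ) = ∏ _p ∈ F6 \ s.filter (· ∈ F6), 1 := by simp
      _ ≤ _ := Finset.prod_le_prod (fun _ _ => zero_le_one) (fun p _ => hone p)
  have h2 : ∏ p ∈ s.filter (· ∉ F6), (1 + 1 / ((p : ℝ) * ((p : ℝ) - 1)))
      ≤ Real.exp (1/30) := by
    calc ∏ p ∈ s.filter (· ∉ F6), (1 + 1 / ((p : ℝ) * ((p : ℝ) - 1)))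
        ≤ ∏ p ∈ s.filter (· ∉ F6), Real.exp (1 / ((p : ℝ) * ((p : ℝ) - 1))) := by
          refine Finset.prod_le_prod (fun p _ => by linarith [a_nonneg p]) (fun p _ => ?_)
          have := Real.add_one_le_exp (1 / ((p : ℝ) * ((p : ℝ) - 1)))
          linarith
      _ = Real.exp (∑ p ∈ s.filter (· ∉ F6), 1 / ((p : ℝ) * ((p : ℝ) - 1))) :=
          (Real.exp_sum _ _).symm
      _ ≤ Real.exp (1/30) := by
          apply Real.exp_le_exp.mpr
          exact tail_sum _ (fun p hp => (Finset.mem_filter.mp hp).2)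
  have hpos1 : (0:ℝ) ≤ ∏ p ∈ s.filter (· ∈ F6), (1 + 1 / ((p : ℝ) * ((p : ℝ) - 1))) :=
    Finset.prod_nonneg fun p _ => le_trans zero_le_one (hone p)
  exact mul_le_mul h1 h2 (Finset.prod_nonneg fun p _ => le_trans zero_le_one (hone p))
    (by positivity)

lemma exp_bound : Real.exp (1/30 : ℝ) ≤ 30/29 := by
  have h := Real.add_one_le_exp (-(1/30) : ℝ)
  rw [Real.exp_neg] at h
  have hp := Real.exp_pos (1/30 : ℝ)
  rw [inv_eq_one_div] at h
  rw [le_div_iff₀ hp] at h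
  nlinarith

end ArtinAux

open ArtinAux

/-- Artin's constant `A = Π_p (1 - 1/(p(p-1)))` converges, is positive, and differs from
Landau's totient constant `Π_p (1 + 1/(p(p-1)))` by less than `2`. -/
theorem artin_constant_positive_and_difference_lt_two :
    Multipliable (fun p : Nat.Primes => 1 - 1 / ((p : ℝ) * ((p : ℝ) - 1))) ∧
    0 < ∏' p : Nat.Primes, (1 - 1 / ((p : ℝ) * ((p : ℝ) - 1))) ∧
    (∏' p : Nat.Primes, (1 + 1 / ((p : ℝ) * ((p : ℝ) - 1)))) -
      (∏' p : Nat.Primes, (1 - 1 / ((p : ℝ) * ((p : ℝ) - 1)))) < 2 := by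
  have hg0 : ∀ p : Nat.Primes, (0:ℝ) ≤ 1 - 1 / ((p : ℝ) * ((p : ℝ) - 1)) :=
    fun p => by linarith [a_le_half p]
  have hg1 : ∀ p : Nat.Primes, 1 - 1 / ((p : ℝ) * ((p : ℝ) - 1)) ≤ 1 :=
    fun p => by linarith [a_nonneg p]
  have hMg : Multipliable (fun p : Nat.Primes => 1 - 1 / ((p : ℝ) * ((p : ℝ) - 1))) :=
    multipliable_of_le_one hg0 hg1
  have hMf : Multipliable (fun p : Nat.Primes => 1 + 1 / ((p : ℝ) * ((p : ℝ) - 1))) :=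
    multipliable_of_one_le (fun p => by linarith [a_nonneg p]) _ prod_one_add_bound
  refine ⟨hMg, ?_, ?_⟩
  · -- positivity of Artin's constant
    have hQ := hMg.hasProd
    have hbd : ∀ s : Finset Nat.Primes,
        (1 : ℝ) - (11351/15015 + 1/30) ≤ ∏ p ∈ s, (1 - 1 / ((p : ℝ) * ((p : ℝ) - 1))) := by
      intro s
      have h1 := one_sub_sum_le_prod s (fun p => 1 / ((p : ℝ) * ((p : ℝ) - 1)))
        (fun p _ => a_nonneg p) (fun p _ => by linarith [a_le_half p])
      have h2 := sum_bound s
      linarith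
    have := ge_of_tendsto' hQ hbd
    have h : (0:ℝ) < 1 - (11351/15015 + 1/30) := by norm_num
    linarith
  · -- the difference bound
    have hQ := hMg.hasProd
    have hQpos : (0:ℝ) ≤ ∏' p : Nat.Primes, (1 - 1 / ((p : ℝ) * ((p : ℝ) - 1))) :=
      ge_of_tendsto' hQ (fun s => Finset.prod_nonneg fun p _ => hg0 p)
    have hP := hMf.hasProd
    have hPle : (∏' p : Nat.Primes, (1 + 1 / ((p : ℝ) * ((p : ℝ) - 1))))
        ≤ ((3*7*21*43*111*157 : ℝ) / (2*6*20*42*110*156)) * Real.exp (1/30) :=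
      le_of_tendsto' hP prod_one_add_bound
    have hlt : ((3*7*21*43*111*157 : ℝ) / (2*6*20*42*110*156)) * Real.exp (1/30) < 2 := by
      have h30 : (0:ℝ) < (3*7*21*43*111*157 : ℝ) / (2*6*20*42*110*156) := by norm_num
      have := exp_bound
      nlinarith
    linarith
end

section
/- For every finite set S of prime numbers one has Σ_{P ⊆ S, |P| odd} Π_{p ∈ P} 1/(p(p−1)) < 4/5; in particular 1 − Σ_{P ⊆ S, |P| odd} Π_{p ∈ P} 1/(p(p−1)) > 0, where the sum runs over all subsets P of S of odd cardinality. -/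
open Finset

noncomputable def xP (p : Nat.Primes) : ℝ := 1 / ((p : ℝ) * ((p : ℝ) - 1))

lemma two_le_P (p : Nat.Primes) : (2:ℝ) ≤ (p:ℝ) := by exact_mod_cast p.2.two_le

lemma xP_pos (p : Nat.Primes) : 0 < xP p := by
  have := two_le_P p
  unfold xP
  have : (0:ℝ) < (p:ℝ) * ((p:ℝ)-1) := by nlinarith
  positivity

lemma xP_le_half (p : Nat.Primes) : xP p ≤ 1/2 := by
  have h := two_le_P p
  unfold xP
  rw [div_le_div_iff₀ (by nlinarith) (by norm_num)]
  nlinarith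

-- Weierstrass
lemma weier (T : Finset Nat.Primes) : 1 - ∑ p ∈ T, xP p ≤ ∏ p ∈ T, (1 - xP p) := by
  induction T using Finset.cons_induction with
  | empty => simp
  | cons a s ha ih =>
    rw [Finset.sum_cons, Finset.prod_cons]
    have h1 : 0 ≤ ∑ p ∈ s, xP p := Finset.sum_nonneg fun p _ => (xP_pos p).le
    have h2 : xP a ≤ 1/2 := xP_le_half a
    have h3 : 0 < xP a := xP_pos a
    nlinarith [Finset.prod_le_one (s := s) (f := fun p => 1 - xP p)
      (fun p _ => by show (0:ℝ) ≤ 1 - xP p; nlinarith [xP_le_half p, xP_pos p])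
      (fun p _ => by show (1:ℝ) - xP p ≤ 1; nlinarith [xP_pos p])]

-- identity: prod(1+x) - prod(1-x) = 2 * sum over odd subsets of prod x
lemma identity (S : Finset Nat.Primes) :
    ∏ p ∈ S, (1 + xP p) - ∏ p ∈ S, (1 - xP p)
      = 2 * ∑ P ∈ S.powerset.filter (fun P => Odd P.card), ∏ p ∈ P, xP p := by
  have hA : ∏ p ∈ S, (1 + xP p) = ∑ t ∈ S.powerset, ∏ p ∈ t, xP p := by
    calc ∏ p ∈ S, (1 + xP p) = ∏ p ∈ S, (xP p + 1) := by simp [add_comm]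
    _ = ∑ t ∈ S.powerset, (∏ p ∈ t, xP p) * ∏ p ∈ S \ t, 1 := Finset.prod_add _ _ _
    _ = ∑ t ∈ S.powerset, ∏ p ∈ t, xP p := by simp
  have hB : ∏ p ∈ S, (1 - xP p) = ∑ t ∈ S.powerset, (-1)^t.card * ∏ p ∈ t, xP p := by
    calc ∏ p ∈ S, (1 - xP p) = ∏ p ∈ S, (-xP p + 1) := Finset.prod_congr rfl fun p _ => by ring
    _ = ∑ t ∈ S.powerset, (∏ p ∈ t, -xP p) * ∏ p ∈ S \ t, 1 := Finset.prod_add _ _ _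
    _ = ∑ t ∈ S.powerset, (-1)^t.card * ∏ p ∈ t, xP p := by
        refine Finset.sum_congr rfl fun t _ => ?_
        have : ∀ p ∈ t, -xP p = (-1) * xP p := fun p _ => by ring
        rw [Finset.prod_congr rfl this, Finset.prod_mul_distrib, Finset.prod_const]; simp
  rw [hA, hB, ← Finset.sum_sub_distrib]
  rw [← Finset.sum_filter_add_sum_filter_not S.powerset (fun P => Odd P.card)]
  have h1 : ∀ t ∈ S.powerset.filter (fun P => Odd P.card),
      ∏ p ∈ t, xP p - (-1)^t.card * ∏ p ∈ t, xP p = 2 * ∏ p ∈ t, xP p := by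
    intro t ht
    rw [Finset.mem_filter] at ht
    rw [ht.2.neg_one_pow]; ring
  have h2 : ∀ t ∈ S.powerset.filter (fun P => ¬ Odd P.card),
      ∏ p ∈ t, xP p - (-1)^t.card * ∏ p ∈ t, xP p = 0 := by
    intro t ht
    rw [Finset.mem_filter] at ht
    rw [(Nat.not_odd_iff_even.mp ht.2).neg_one_pow]; ring
  rw [Finset.sum_congr rfl h1, Finset.sum_congr rfl h2, Finset.mul_sum]
  simp [mul_comm]

noncomputable def uT (k : ℕ) : ℝ := 1/(2*(2*(k:ℝ)-1))

lemma tail_sum (T : Finset Nat.Primes) (hT : ∀ p ∈ T, 30 ≤ (p:ℕ)) :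
    ∑ p ∈ T, xP p ≤ 1/58 := by
  set φ : Nat.Primes → ℕ := fun p => (p:ℕ)/2 with hφ
  have hodd : ∀ p ∈ T, 2 * φ p + 1 = (p:ℕ) := by
    intro p hp
    have hne : (p:ℕ) ≠ 2 := by have := hT p hp; omega
    have : Odd (p:ℕ) := p.2.odd_of_ne_two hne
    have := Nat.div_two_mul_two_add_one_of_odd this
    simpa [hφ, mul_comm] using this
  have hge : ∀ p ∈ T, 15 ≤ φ p := by
    intro p hp
    have h1 := hT p hp; have h2 := hodd p hp; omega
  have hstep : ∀ p ∈ T, xP p ≤ uT (φ p) - uT (φ p + 1) := by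
    intro p hp
    have h2 := hodd p hp
    have hk : (15:ℕ) ≤ φ p := hge p hp
    set k : ℝ := (φ p : ℝ) with hkdef
    have hkR : (15:ℝ) ≤ k := by rw [hkdef]; exact_mod_cast hk
    have hpR : (p:ℝ) = 2*k + 1 := by
      rw [hkdef]; push_cast [← h2]; ring
    have e1 : uT (φ p) - uT (φ p + 1) = 1/((2*k-1)*(2*k+1)) := by
      unfold uT; rw [← hkdef]; push_cast
      rw [div_sub_div _ _ (by nlinarith) (by nlinarith)]
      rw [div_eq_div_iff (by nlinarith) (by nlinarith)]
      ring
    rw [e1]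
    unfold xP
    rw [hpR, div_le_div_iff₀ (by nlinarith) (by nlinarith)]
    nlinarith
  have hinj : Set.InjOn φ T := by
    intro p hp q hq h
    have h1 := hodd p hp; have h2 := hodd q hq
    exact Subtype.ext (by omega)
  calc ∑ p ∈ T, xP p ≤ ∑ p ∈ T, (uT (φ p) - uT (φ p + 1)) := Finset.sum_le_sum hstep
    _ = ∑ k ∈ T.image φ, (uT k - uT (k+1)) := (Finset.sum_image (f := fun k => uT k - uT (k+1)) (fun p hp q hq => hinj hp hq)).symm
    _ ≤ ∑ k ∈ Finset.Ico 15 ((T.image φ).sup id + 1), (uT k - uT (k+1)) := by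
        apply Finset.sum_le_sum_of_subset_of_nonneg
        · intro k hk
          rw [Finset.mem_image] at hk
          obtain ⟨p, hp, rfl⟩ := hk
          rw [Finset.mem_Ico]
          exact ⟨hge p hp, Nat.lt_succ_of_le (Finset.le_sup (f := id)
            (Finset.mem_image_of_mem φ hp))⟩
        · intro k hk _
          rw [Finset.mem_Ico] at hk
          have h15 : (15:ℝ) ≤ (k:ℝ) := by exact_mod_cast hk.1
          unfold uT; push_cast
          rw [sub_nonneg]
          apply one_div_le_one_div_of_le (by nlinarith)
          nlinarith
    _ ≤ 1/58 := by
        rw [Finset.sum_Ico_eq_sum_range]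
        have : ∀ i, uT (15 + i) - uT (15 + i + 1) = uT (15 + i) - uT (15 + (i+1)) := by
          intro i; ring_nf
        calc ∑ i ∈ Finset.range ((T.image φ).sup id + 1 - 15), (uT (15+i) - uT (15+i+1))
            = uT (15 + 0) - uT (15 + ((T.image φ).sup id + 1 - 15)) := by
              rw [Finset.sum_congr rfl fun i _ => this i]
              exact Finset.sum_range_sub' (fun i => uT (15+i)) _
          _ ≤ 1/58 := by
              have : (0:ℝ) ≤ uT (15 + ((T.image φ).sup id + 1 - 15)) := by
                have h15' : (15:ℝ) ≤ ((15 + ((T.image φ).sup id + 1 - 15) : ℕ) : ℝ) := by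
                  exact_mod_cast Nat.le_add_right 15 _
                unfold uT
                apply le_of_lt
                apply div_pos one_pos
                nlinarith
              have h15 : uT (15 + 0) = 1/58 := by norm_num [uT]
              linarith

abbrev mkP (n : ℕ) (h : n.Prime) : Nat.Primes := ⟨n, h⟩

def SP : Finset Nat.Primes :=
  {mkP 2 (by norm_num), mkP 3 (by norm_num), mkP 5 (by norm_num), mkP 7 (by norm_num),
   mkP 11 (by norm_num), mkP 13 (by norm_num), mkP 17 (by norm_num), mkP 19 (by norm_num),
   mkP 23 (by norm_num), mkP 29 (by norm_num)}

lemma mem_SP (p : Nat.Primes) (h : (p:ℕ) < 30) : p ∈ SP := by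
  obtain ⟨n, hp⟩ := p
  have h2 : 2 ≤ n := hp.two_le
  have h30 : n < 30 := h
  simp only [SP, Finset.mem_insert, Finset.mem_singleton, Subtype.mk.injEq]
  interval_cases n <;> clear h <;> revert hp <;> show ∀ hp, mkP _ hp ∈ _ <;> decide

lemma prodSP_plus : ∏ p ∈ SP, (1 + xP p) = 82402282638039/42710402662400 := by
  simp only [SP]
  repeat rw [Finset.prod_insert (by decide)]
  rw [Finset.prod_singleton]
  norm_num [xP]

lemma prodSP_minus : ∏ p ∈ SP, (1 - xP p) = 476667196558145/1265298744213504 := by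
  simp only [SP]
  repeat rw [Finset.prod_insert (by decide)]
  rw [Finset.prod_singleton]
  norm_num [xP]
-- main theorem part (appended after lemmas)
open Finset in
/-- For every finite set `S` of primes,
`Σ_{P ⊆ S, |P| odd} Π_{p ∈ P} 1/(p(p-1)) < 4/5`; in particular
`1 − Σ_{P ⊆ S, |P| odd} Π_{p ∈ P} 1/(p(p-1)) > 0`. -/
theorem sum_odd_subsets_prime_prod_lt (S : Finset Nat.Primes) :
    ∑ P ∈ S.powerset.filter (fun P => Odd P.card), ∏ p ∈ P, 1 / ((p : ℝ) * ((p : ℝ) - 1))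
      < 4 / 5 ∧
    0 < 1 - ∑ P ∈ S.powerset.filter (fun P => Odd P.card),
      ∏ p ∈ P, 1 / ((p : ℝ) * ((p : ℝ) - 1)) := by
  have key : ∑ P ∈ S.powerset.filter (fun P => Odd P.card),
      ∏ p ∈ P, 1 / ((p : ℝ) * ((p : ℝ) - 1)) < 4/5 := by
    have hO : ∑ P ∈ S.powerset.filter (fun P => Odd P.card),
        ∏ p ∈ P, 1 / ((p : ℝ) * ((p : ℝ) - 1))
        = ∑ P ∈ S.powerset.filter (fun P => Odd P.card), ∏ p ∈ P, xP p := rfl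
    rw [hO]
    set O := ∑ P ∈ S.powerset.filter (fun P => Odd P.card), ∏ p ∈ P, xP p with hOdef
    have hid := identity S
    -- split products
    set S₁ := S.filter (fun p : Nat.Primes => (p:ℕ) < 30) with hS₁
    set S₂ := S.filter (fun p : Nat.Primes => ¬ (p:ℕ) < 30) with hS₂
    have hA : ∏ p ∈ S, (1 + xP p) = (∏ p ∈ S₁, (1 + xP p)) * ∏ p ∈ S₂, (1 + xP p) :=
      (Finset.prod_filter_mul_prod_filter_not S _ _).symm
    have hB : ∏ p ∈ S, (1 - xP p) = (∏ p ∈ S₁, (1 - xP p)) * ∏ p ∈ S₂, (1 - xP p) :=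
      (Finset.prod_filter_mul_prod_filter_not S _ _).symm
    -- basic facts
    have hx1 : ∀ p : Nat.Primes, (1:ℝ)/2 ≤ 1 - xP p := fun p => by
      have := xP_le_half p; linarith
    have hx2 : ∀ p : Nat.Primes, 1 - xP p ≤ 1 := fun p => by
      have := xP_pos p; linarith
    -- S₁ bounds
    have hsub : S₁ ⊆ SP := by
      intro p hp
      rw [hS₁, Finset.mem_filter] at hp
      exact mem_SP p hp.2
    have hA₁ : ∏ p ∈ S₁, (1 + xP p) ≤ 82402282638039/42710402662400 := by
      rw [← prodSP_plus, ← Finset.prod_sdiff hsub]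
      have h1 : (1:ℝ) ≤ ∏ p ∈ SP \ S₁, (1 + xP p) := by
        calc (1:ℝ) = ∏ _p ∈ SP \ S₁, (1:ℝ) := by rw [Finset.prod_const_one]
        _ ≤ ∏ p ∈ SP \ S₁, (1 + xP p) := Finset.prod_le_prod
            (fun p _ => by norm_num)
            (fun p _ => by show (1:ℝ) ≤ 1 + xP p; have := xP_pos p; linarith)
      have h2 : (0:ℝ) ≤ ∏ p ∈ S₁, (1 + xP p) :=
        Finset.prod_nonneg (fun p _ => by show (0:ℝ) ≤ 1 + xP p; have := xP_pos p; linarith)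
      nlinarith
    have hB₁ : (476667196558145:ℝ)/1265298744213504 ≤ ∏ p ∈ S₁, (1 - xP p) := by
      rw [← prodSP_minus, ← Finset.prod_sdiff hsub]
      have h1 : ∏ p ∈ SP \ S₁, (1 - xP p) ≤ 1 :=
        Finset.prod_le_one (fun p _ => by have := hx1 p; linarith) (fun p _ => by exact hx2 p)
      have h2 : (0:ℝ) ≤ ∏ p ∈ S₁, (1 - xP p) :=
        Finset.prod_nonneg (fun p _ => by show (0:ℝ) ≤ 1 - xP p; have := hx1 p; linarith)
      nlinarith
    -- S₂ bounds
    have htail : ∑ p ∈ S₂, xP p ≤ 1/58 := by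
      apply tail_sum
      intro p hp
      rw [hS₂, Finset.mem_filter] at hp
      omega
    have hB₂ : (57:ℝ)/58 ≤ ∏ p ∈ S₂, (1 - xP p) := by
      have := weier S₂
      linarith
    have hAB₂ : (∏ p ∈ S₂, (1 + xP p)) * ∏ p ∈ S₂, (1 - xP p) ≤ 1 := by
      rw [← Finset.prod_mul_distrib]
      apply Finset.prod_le_one
      · intro p _
        have h1 := xP_pos p; have h2 := xP_le_half p
        nlinarith
      · intro p _
        have h1 := xP_pos p
        nlinarith
    have hA₂ : ∏ p ∈ S₂, (1 + xP p) ≤ 58/57 := by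
      have hpos : (0:ℝ) < ∏ p ∈ S₂, (1 - xP p) := by linarith
      have hApos : (0:ℝ) ≤ ∏ p ∈ S₂, (1 + xP p) :=
        Finset.prod_nonneg (fun p _ => by show (0:ℝ) ≤ 1 + xP p; have := xP_pos p; linarith)
      nlinarith
    -- combine
    have hA₁pos : (0:ℝ) ≤ ∏ p ∈ S₁, (1 + xP p) :=
      Finset.prod_nonneg (fun p _ => by show (0:ℝ) ≤ 1 + xP p; have := xP_pos p; linarith)
    have hA₂pos : (0:ℝ) ≤ ∏ p ∈ S₂, (1 + xP p) :=
      Finset.prod_nonneg (fun p _ => by show (0:ℝ) ≤ 1 + xP p; have := xP_pos p; linarith)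
    have hAle : ∏ p ∈ S, (1 + xP p) ≤ (82402282638039/42710402662400) * (58/57) := by
      rw [hA]
      apply mul_le_mul hA₁ hA₂ hA₂pos (by norm_num)
    have hBge : (476667196558145/1265298744213504 : ℝ) * (57/58) ≤ ∏ p ∈ S, (1 - xP p) := by
      rw [hB]
      apply mul_le_mul hB₁ hB₂ (by norm_num) (by linarith [hB₁])
    have h2O : 2 * O < 8/5 := by
      rw [← hid]
      have : (82402282638039/42710402662400 : ℝ) * (58/57)
          - (476667196558145/1265298744213504) * (57/58) < 8/5 := by norm_num
      linarith
    linarith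
  exact ⟨key, by linarith⟩
end
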